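/- Let d(π,π') = |π| + |π'| - 2|π ∨ π'| on the lattice of partitions of a finite set. Then for any partitions π₁, ..., π_k: d(π₁,π₂) + d(π₂,π₃) + ... + d(π_{k-1},π_k) ≥ |π₁| + |π_k| - 2|π₁ ∨ π₂ ∨ ... ∨ π_k|. -/
import Mathlib

/-- The number of blocks of a partition of a finite set, where a partition of `E`
is encoded as a `Setoid E` and its blocks are the equivalence classes. -/
noncomputable def partitionBlocks {E : Type*} (π : Setoid E) : ℤ :=
  (Nat.card (Quotient π) : ℤ)

/-- The distance `d(π,π') = |π| + |π'| - 2|π ∨ π'|` on the lattice of partitions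
of a finite set. -/
noncomputable def partitionDist {E : Type*} (π π' : Setoid E) : ℤ :=
  partitionBlocks π + partitionBlocks π' - 2 * partitionBlocks (π ⊔ π')

section Aux

variable {E : Type*}

/-- The setoid obtained from `t` by merging the classes of `x` and `y`. -/
def mergeSetoid (t : Setoid E) (x y : E) : Setoid E where
  r u v := t.r u v ∨ (t.r u x ∧ t.r y v) ∨ (t.r u y ∧ t.r x v)
  iseqv := by
    constructor
    · intro u; exact Or.inl (t.refl' u)
    · rintro u v (h | ⟨h1, h2⟩ | ⟨h1, h2⟩)
      · exact Or.inl (t.symm' h)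
      · exact Or.inr (Or.inr ⟨t.symm' h2, t.symm' h1⟩)
      · exact Or.inr (Or.inl ⟨t.symm' h2, t.symm' h1⟩)
    · rintro u v w (h | ⟨h1, h2⟩ | ⟨h1, h2⟩) (h' | ⟨h1', h2'⟩ | ⟨h1', h2'⟩)
      · exact Or.inl (t.trans' h h')
      · exact Or.inr (Or.inl ⟨t.trans' h h1', h2'⟩)
      · exact Or.inr (Or.inr ⟨t.trans' h h1', h2'⟩)
      · exact Or.inr (Or.inl ⟨h1, t.trans' h2 h'⟩)
      · exact Or.inr (Or.inl ⟨h1, h2'⟩)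
      · exact Or.inl (t.trans' h1 h2')
      · exact Or.inr (Or.inr ⟨h1, t.trans' h2 h'⟩)
      · exact Or.inl (t.trans' h1 h2')
      · exact Or.inr (Or.inr ⟨h1, h2'⟩)

lemma le_mergeSetoid (t : Setoid E) (x y : E) : t ≤ mergeSetoid t x y :=
  Setoid.le_def.mpr fun h => Or.inl h

lemma mergeSetoid_rel (t : Setoid E) (x y : E) : (mergeSetoid t x y).r x y :=
  Or.inr (Or.inl ⟨t.refl' x, t.refl' y⟩)

lemma mergeSetoid_le {t s : Setoid E} {x y : E} (hts : t ≤ s) (hxy : s.r x y) :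
    mergeSetoid t x y ≤ s := by
  rw [Setoid.le_def] at hts ⊢
  rintro u v (h | ⟨h1, h2⟩ | ⟨h1, h2⟩)
  · exact hts h
  · exact s.trans' (hts h1) (s.trans' hxy (hts h2))
  · exact s.trans' (hts h1) (s.trans' (s.symm' hxy) (hts h2))

lemma sup_mergeSetoid (a c : Setoid E) (x y : E) :
    a ⊔ mergeSetoid c x y = mergeSetoid (a ⊔ c) x y := by
  apply le_antisymm
  · exact sup_le (le_sup_left.trans (le_mergeSetoid _ x y))
      (mergeSetoid_le (le_sup_right.trans (le_mergeSetoid _ x y)) (mergeSetoid_rel _ x y))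
  · exact mergeSetoid_le (sup_le_sup_left (le_mergeSetoid c x y) a)
      (Setoid.le_def.mp le_sup_right (mergeSetoid_rel c x y))


section Card

variable [Finite E]

lemma card_quot_le_of_le {a b : Setoid E} (h : a ≤ b) :
    Nat.card (Quotient b) ≤ Nat.card (Quotient a) :=
  Nat.card_le_card_of_surjective (Quotient.map' id fun _ _ hr => Setoid.le_def.mp h hr)
    (fun q => q.inductionOn' fun e => ⟨Quotient.mk'' e, rfl⟩)

lemma card_le_merge_add_one (t : Setoid E) (x y : E) :
    Nat.card (Quotient t) ≤ Nat.card (Quotient (mergeSetoid t x y)) + 1 := by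
  classical
  set f : Quotient t → Quotient (mergeSetoid t x y) :=
    Quotient.map' id (fun _ _ hr => Or.inl hr) with hf
  have key : ∀ u v : Quotient t, f u = f v → u = v ∨ u = Quotient.mk'' y ∨ v = Quotient.mk'' y := by
    intro u v
    induction u, v using Quotient.inductionOn₂' with
    | h a b =>
      intro h
      have : (mergeSetoid t x y).r a b := Quotient.eq''.mp h
      rcases this with h | ⟨h1, h2⟩ | ⟨h1, h2⟩
      · exact Or.inl (Quotient.eq''.mpr h)
      · exact Or.inr (Or.inr (Quotient.eq''.mpr (t.symm' h2)))
      · exact Or.inr (Or.inl (Quotient.eq''.mpr h1))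
  set g : Quotient t → Quotient (mergeSetoid t x y) ⊕ Unit :=
    fun u => if u = Quotient.mk'' y then Sum.inr () else Sum.inl (f u) with hg
  have hginj : Function.Injective g := by
    intro u v huv
    simp only [hg] at huv
    split_ifs at huv with h1 h2 h2
    all_goals try exact h1.trans h2.symm
    rcases key u v (Sum.inl.inj huv) with h | h | h
    · exact h
    · exact absurd h h1
    · exact absurd h h2
  calc Nat.card (Quotient t) ≤ Nat.card (Quotient (mergeSetoid t x y) ⊕ Unit) :=
        Nat.card_le_card_of_injective g hginj
    _ = Nat.card (Quotient (mergeSetoid t x y)) + 1 := by simp [Nat.card_sum]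

lemma card_merge_lt (t : Setoid E) {x y : E} (hxy : ¬ t.r x y) :
    Nat.card (Quotient (mergeSetoid t x y)) < Nat.card (Quotient t) := by
  have hle := card_quot_le_of_le (le_mergeSetoid t x y)
  rcases lt_or_eq_of_le hle with h | h
  · exact h
  exfalso
  set f : Quotient t → Quotient (mergeSetoid t x y) :=
    Quotient.map' id (fun _ _ hr => Or.inl hr) with hf
  have hsurj : Function.Surjective f := fun q => q.inductionOn' fun e => ⟨Quotient.mk'' e, rfl⟩
  have hbij : Function.Bijective f :=
    (Nat.bijective_iff_surjective_and_card f).mpr ⟨hsurj, h.symm⟩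
  have : f (Quotient.mk'' x) = f (Quotient.mk'' y) :=
    Quotient.eq''.mpr (mergeSetoid_rel t x y)
  exact hxy (Quotient.eq''.mp (hbij.injective this))

end Card

lemma card_subadd [Finite E] (a b : Setoid E) :
    ∀ n (c : Setoid E), Nat.card (Quotient c) ≤ n → c ≤ b →
    Nat.card (Quotient (a ⊔ c)) + Nat.card (Quotient b) ≤
      Nat.card (Quotient (a ⊔ b)) + Nat.card (Quotient c) := by
  intro n
  induction n with
  | zero =>
    intro c hc _
    have h0 : Nat.card (Quotient c) = 0 := Nat.le_zero.mp hc
    have hE : IsEmpty E := by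
      rcases Nat.card_eq_zero.mp h0 with h | h
      · exact ⟨fun e => h.false (Quotient.mk'' e)⟩
      · exact absurd h (not_infinite_iff_finite.mpr inferInstance)
    have hz : ∀ s : Setoid E, Nat.card (Quotient s) = 0 := fun s =>
      Nat.card_eq_zero.mpr (Or.inl ⟨fun q => q.inductionOn' fun e => hE.false e⟩)
    simp [hz]
  | succ n ih =>
    intro c hc hcb
    by_cases hbc : b ≤ c
    · obtain rfl : c = b := le_antisymm hcb hbc
      omega
    · have hex : ∃ x y, b.r x y ∧ ¬ c.r x y := by
        by_contra h
        push_neg at h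
        exact hbc (Setoid.le_def.mpr fun {x y} hxy => h x y hxy)
      obtain ⟨x, y, hbxy, hcxy⟩ := hex
      have hc'b : mergeSetoid c x y ≤ b := mergeSetoid_le hcb hbxy
      have hlt := card_merge_lt c hcxy
      have h1 := ih (mergeSetoid c x y) (by omega) hc'b
      have h2 : Nat.card (Quotient (a ⊔ c)) ≤
          Nat.card (Quotient (a ⊔ mergeSetoid c x y)) + 1 := by
        rw [sup_mergeSetoid]
        exact card_le_merge_add_one (a ⊔ c) x y
      omega

lemma card_semimodular [Finite E] {a b c : Setoid E} (hca : c ≤ a) (hcb : c ≤ b) :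
    Nat.card (Quotient a) + Nat.card (Quotient b) ≤
      Nat.card (Quotient (a ⊔ b)) + Nat.card (Quotient c) := by
  have h := card_subadd a b _ c le_rfl hcb
  rwa [sup_eq_left.mpr hca] at h

end Aux

/-- for partitions `π 0, …, π k` of a finite set,
`d(π₀,π₁) + ⋯ + d(π_{k-1},π_k) ≥ |π₀| + |π_k| - 2|π₀ ∨ ⋯ ∨ π_k|`. -/
theorem partitionDist_chain_ge {E : Type*} [Finite E] (k : ℕ)
    (π : Fin (k + 1) → Setoid E) :
    ∑ i : Fin k, partitionDist (π i.castSucc) (π i.succ) ≥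
      partitionBlocks (π 0) + partitionBlocks (π (Fin.last k)) -
        2 * partitionBlocks (⨆ i, π i) := by
  induction k with
  | zero =>
    have h1 : (⨆ i, π i) = π 0 := by
      apply le_antisymm
      · exact iSup_le fun i => le_of_eq (congrArg π (Fin.eq_zero i))
      · exact le_iSup π 0
    have h2 : Fin.last 0 = 0 := rfl
    simp [h1, h2]
    omega
  | succ k ih =>
    rw [Fin.sum_univ_castSucc
      (f := fun i : Fin (k+1) => partitionDist (π i.castSucc) (π i.succ))]
    simp only [Fin.succ_castSucc]
    have IH := ih (fun i => π i.castSucc)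
    simp only [Fin.castSucc_zero] at IH
    have hS : (⨆ i : Fin (k+2), π i) =
        (⨆ i : Fin (k+1), π i.castSucc) ⊔ π (Fin.last (k+1)) := by
      apply le_antisymm
      · refine iSup_le fun i => ?_
        induction i using Fin.lastCases with
        | last => exact le_sup_right
        | cast j => exact le_trans (le_iSup (fun i : Fin (k+1) => π i.castSucc) j) le_sup_left
      · exact sup_le (iSup_le fun j => le_iSup π j.castSucc) (le_iSup π (Fin.last (k+1)))
    have hsemi := card_semimodular (E := E)
      (a := ⨆ i : Fin (k+1), π i.castSucc)
      (b := π ((Fin.last k).castSucc) ⊔ π (Fin.last (k+1)))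
      (c := π ((Fin.last k).castSucc))
      (le_iSup (fun i : Fin (k+1) => π i.castSucc) (Fin.last k)) le_sup_left
    have hab : (⨆ i : Fin (k+1), π i.castSucc) ⊔
        (π ((Fin.last k).castSucc) ⊔ π (Fin.last (k+1))) = ⨆ i : Fin (k+2), π i := by
      rw [← sup_assoc,
        sup_eq_left.mpr (le_iSup (fun i : Fin (k+1) => π i.castSucc) (Fin.last k)), hS]
    rw [hab] at hsemi
    have hsemi' : (Nat.card (Quotient (⨆ i : Fin (k+1), π i.castSucc)) : ℤ) +
        (Nat.card (Quotient (π ((Fin.last k).castSucc) ⊔ π (Fin.last (k+1)))) : ℤ) ≤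
        (Nat.card (Quotient (⨆ i : Fin (k+2), π i)) : ℤ) +
        (Nat.card (Quotient (π ((Fin.last k).castSucc))) : ℤ) := by exact_mod_cast hsemi
    have hlast : (Fin.last k).succ = Fin.last (k+1) := Fin.succ_last k
    rw [hlast]
    simp only [partitionDist, partitionBlocks] at IH ⊢
    linarith [IH, hsemi']
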